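/- Let d ≥ 1, let n ∈ ℝ^d be a unit vector, β ∈ ℝ^d, and A := max(1, ‖β‖). With 𝒩 := [[0_{d,d}, n],[nᵀ, β·n]], ℳ_D := [[0_{d,d}, −n],[nᵀ, 0]], and the boundary penalty S^b := A [[0_{d,d}, 0_d],[0_dᵀ, 1]], the following hold: (i) Ker(ℳ_D − 𝒩) ⊆ Ker(ℳ_D + S^b − 𝒩); (ii) ((ℳ_D + S^b) v, v) = A v_p² ≥ 0 for all v = (v_σ, v_p) ∈ ℝ^{d+1}; (iii) for all w, v ∈ ℝ^{d+1}, |((ℳ_D + S^b + 𝒩) w, v)| ≤ 4 A^{1/2} ‖w‖ ((ℳ_D + S^b) v, v)^{1/2}. -/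

import Mathlib

open Matrix

/-- With `A = max(1, ‖β‖)`, the boundary matrices
`𝒩 = [[0, n],[nᵀ, β·n]]`, `ℳ_D = [[0, −n],[nᵀ, 0]]` and the boundary penalty
`S^b = A [[0, 0],[0, 1]]` for the scalar diffusion–advection–reaction problem:
(i) `Ker(ℳ_D − 𝒩) ⊆ Ker(ℳ_D + S^b − 𝒩)`;
(ii) `((ℳ_D + S^b) v, v) = A v_p² ≥ 0` for all `v = (v_σ, v_p)`;
(iii) `|((ℳ_D + S^b + 𝒩) w, v)| ≤ 4 A^{1/2} ‖w‖ ((ℳ_D + S^b) v, v)^{1/2}` for all `w, v`. -/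
theorem stmt17 (d : ℕ) (hd : 1 ≤ d) (n β : Fin d → ℝ) (hn : ∑ i, n i ^ 2 = 1) :
    let A : ℝ := max 1 (Real.sqrt (∑ i, β i ^ 2))
    let N : Matrix (Fin d ⊕ Unit) (Fin d ⊕ Unit) ℝ :=
      Matrix.fromBlocks 0 (Matrix.of fun j _ => n j) (Matrix.of fun _ j => n j)
        (Matrix.of fun _ _ => β ⬝ᵥ n)
    let MD : Matrix (Fin d ⊕ Unit) (Fin d ⊕ Unit) ℝ :=
      Matrix.fromBlocks 0 (Matrix.of fun j _ => -n j) (Matrix.of fun _ j => n j)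
        (Matrix.of fun _ _ => 0)
    let Sb : Matrix (Fin d ⊕ Unit) (Fin d ⊕ Unit) ℝ :=
      Matrix.fromBlocks 0 0 0 (Matrix.of fun _ _ => A)
    LinearMap.ker (MD - N).mulVecLin ≤ LinearMap.ker (MD + Sb - N).mulVecLin ∧
    (∀ v : Fin d ⊕ Unit → ℝ, (MD + Sb).mulVec v ⬝ᵥ v = A * v (Sum.inr ()) ^ 2) ∧
    (∀ w v : Fin d ⊕ Unit → ℝ,
      |(MD + Sb + N).mulVec w ⬝ᵥ v| ≤
        4 * Real.sqrt A * Real.sqrt (∑ i, w i ^ 2) *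
          Real.sqrt ((MD + Sb).mulVec v ⬝ᵥ v)) := by
  intro A N MD Sb
  have hA1 : (1:ℝ) ≤ A := le_max_left _ _
  have hA0 : (0:ℝ) ≤ A := by linarith
  have hβA : Real.sqrt (∑ i, β i ^ 2) ≤ A := le_max_right _ _
  refine ⟨?_, ?_, ?_⟩
  · intro v hv
    simp only [LinearMap.mem_ker, Matrix.mulVecLin_apply] at hv ⊢
    have h2 : ∀ j, n j * v (Sum.inr ()) = 0 := by
      intro j
      have := congrFun hv (Sum.inl j)
      simp [Matrix.mulVec, dotProduct, Fintype.sum_sum_type, MD, Sb, N,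
        Matrix.sub_apply] at this
      rcases this with h | h
      · have hnj : n j = 0 := by linarith
        simp [hnj]
      · simp [h]
    have hvp : v (Sum.inr ()) = 0 := by
      have : v (Sum.inr ()) = ∑ i, n i * (n i * v (Sum.inr ())) := by
        rw [show (∑ i, n i * (n i * v (Sum.inr ()))) = (∑ i, n i ^ 2) * v (Sum.inr ()) by
          rw [Finset.sum_mul]; exact Finset.sum_congr rfl fun i _ => by ring]
        rw [hn, one_mul]
      simp [h2] at this
      exact this
    funext x
    cases x <;>
      simp [Matrix.mulVec, dotProduct, Fintype.sum_sum_type, MD, Sb, N,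
        Matrix.sub_apply, Matrix.add_apply, hvp]
  · intro v
    simp [Matrix.mulVec, dotProduct, Fintype.sum_sum_type, MD, Sb, N,
      Matrix.add_apply]
    have h : ∑ x, n x * v (Sum.inr PUnit.unit) * v (Sum.inl x)
        = v (Sum.inr PUnit.unit) * ∑ x, n x * v (Sum.inl x) := by
      rw [Finset.mul_sum]; exact Finset.sum_congr rfl fun i _ => by ring
    rw [h]; ring
  · intro w v
    have hT0 : (0:ℝ) ≤ ∑ i, w i ^ 2 := Finset.sum_nonneg fun i _ => sq_nonneg _
    set T := Real.sqrt (∑ i, w i ^ 2) with hTdef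
    have hT : (0:ℝ) ≤ T := Real.sqrt_nonneg _
    set X := ∑ i, n i * w (Sum.inl i) with hXdef
    set c := ∑ i, β i * n i with hcdef
    set wp := w (Sum.inr ()) with hwpdef
    set vp := v (Sum.inr ()) with hvpdef
    have hsplit : (∑ i, w i ^ 2) = (∑ i, w (Sum.inl i) ^ 2) + wp ^ 2 := by
      rw [Fintype.sum_sum_type]; simp [hwpdef]
    have hX : |X| ≤ T := by
      rw [hTdef, ← Real.sqrt_sq_eq_abs]
      apply Real.sqrt_le_sqrt
      calc X ^ 2 ≤ (∑ i, n i ^ 2) * ∑ i, w (Sum.inl i) ^ 2 :=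
            Finset.sum_mul_sq_le_sq_mul_sq _ _ _
        _ = ∑ i, w (Sum.inl i) ^ 2 := by rw [hn, one_mul]
        _ ≤ ∑ i, w i ^ 2 := by rw [hsplit]; nlinarith [sq_nonneg wp]
    have hwp : |wp| ≤ T := by
      rw [hTdef, ← Real.sqrt_sq_eq_abs]
      apply Real.sqrt_le_sqrt
      rw [hsplit]
      have : (0:ℝ) ≤ ∑ i, w (Sum.inl i) ^ 2 := Finset.sum_nonneg fun i _ => sq_nonneg _
      linarith
    have hc : |c| ≤ A := by
      have h1 : c ^ 2 ≤ ∑ i, β i ^ 2 := by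
        calc c ^ 2 ≤ (∑ i, β i ^ 2) * ∑ i, n i ^ 2 := Finset.sum_mul_sq_le_sq_mul_sq _ _ _
          _ = ∑ i, β i ^ 2 := by rw [hn, mul_one]
      have h2 := Real.sqrt_le_sqrt h1
      rw [Real.sqrt_sq_eq_abs] at h2
      exact h2.trans hβA
    have hLHS : (MD + Sb + N).mulVec w ⬝ᵥ v = (2 * X + (c + A) * wp) * vp := by
      simp [Matrix.mulVec, dotProduct, Fintype.sum_sum_type, MD, Sb, N,
        Matrix.add_apply, hXdef, hcdef, hwpdef, hvpdef]
      have h : ∑ x, (n x + n x) * w (Sum.inl x) = 2 * ∑ i, n i * w (Sum.inl i) := by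
        rw [Finset.mul_sum]; exact Finset.sum_congr rfl fun i _ => by ring
      rw [h]; exact Or.inl (by first | trivial | ring)
    have hRHS : (MD + Sb).mulVec v ⬝ᵥ v = A * vp ^ 2 := by
      simp [Matrix.mulVec, dotProduct, Fintype.sum_sum_type, MD, Sb, N,
        Matrix.add_apply, hvpdef]
      have h : ∑ x, n x * v (Sum.inr PUnit.unit) * v (Sum.inl x)
          = v (Sum.inr PUnit.unit) * ∑ x, n x * v (Sum.inl x) := by
        rw [Finset.mul_sum]; exact Finset.sum_congr rfl fun i _ => by ring
      rw [h]; ring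
    rw [hLHS, hRHS]
    have hsq : Real.sqrt (A * vp ^ 2) = Real.sqrt A * |vp| := by
      rw [Real.sqrt_mul hA0, Real.sqrt_sq_eq_abs]
    rw [hsq, abs_mul]
    have hb : |2 * X + (c + A) * wp| ≤ 4 * A * T := by
      calc |2 * X + (c + A) * wp| ≤ |2 * X| + |(c + A) * wp| := abs_add_le _ _
        _ = 2 * |X| + |c + A| * |wp| := by rw [abs_mul, abs_mul]; norm_num
        _ ≤ 2 * T + 2 * A * T := by
            have h1 : |c + A| ≤ 2 * A := by
              have := abs_add_le c A
              rw [abs_of_nonneg hA0] at this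
              linarith
            nlinarith [abs_nonneg (c + A), abs_nonneg wp]
        _ ≤ 4 * A * T := by nlinarith
    calc |2 * X + (c + A) * wp| * |vp| ≤ 4 * A * T * |vp| :=
          mul_le_mul_of_nonneg_right hb (abs_nonneg _)
      _ = 4 * Real.sqrt A * T * (Real.sqrt A * |vp|) := by
          rw [show (4:ℝ) * Real.sqrt A * T * (Real.sqrt A * |vp|)
              = 4 * (Real.sqrt A * Real.sqrt A) * T * |vp| by ring,
            Real.mul_self_sqrt hA0]
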